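/- Let b : ℤ → ℝ be a bounded sequence with lim_{N→∞} (1/(2N+1)) · Σ_{m=-N}^{N} b_m² = 1, and let (ξ_k)_{k∈ℤ} be i.i.d. real random variables with P(ξ_k = 1) = P(ξ_k = −1) = 1/2. Then almost surely, for every n ∈ ℤ, lim_{N→∞} (1/(2N+1)) · Σ_{m=-N}^{N} (ξ_m b_m) · (ξ_{m+n} b_{m+n}) = δ_{n,0}, where δ is the Kronecker delta. (Randomising the signs of weights with average squared scattering strength 1 produces vanishing two-point correlations, so that the diffraction of the covering hull equals Lebesgue measure; this is the mechanism behind the random-sign cover of the Thue–Morse hull.) -/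

import Mathlib

open MeasureTheory ProbabilityTheory Filter

namespace RandomSignAux

variable {Ω : Type*} [MeasurableSpace Ω] (P : Measure Ω) [IsProbabilityMeasure P]
  (ξ : ℤ → Ω → ℝ)

lemma ae_pm (hmeas : ∀ k, Measurable (ξ k))
    (hdist : ∀ k, P {ω | ξ k ω = 1} = 1/2 ∧ P {ω | ξ k ω = -1} = 1/2) :
    ∀ᵐ ω ∂P, ∀ k, ξ k ω = 1 ∨ ξ k ω = -1 := by
  rw [ae_all_iff]
  intro k
  have hA : MeasurableSet {ω | ξ k ω = 1} := hmeas k (measurableSet_singleton 1)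
  have hB : MeasurableSet {ω | ξ k ω = -1} := hmeas k (measurableSet_singleton (-1))
  have hdisj : Disjoint {ω | ξ k ω = 1} {ω | ξ k ω = -1} := by
    rw [Set.disjoint_left]; intro ω h1 h2
    simp only [Set.mem_setOf_eq] at h1 h2; rw [h1] at h2; norm_num at h2
  have hunion : P ({ω | ξ k ω = 1} ∪ {ω | ξ k ω = -1}) = 1 := by
    rw [measure_union hdisj hB, (hdist k).1, (hdist k).2]
    rw [one_div, ENNReal.inv_two_add_inv_two]
  have hc : P ({ω | ξ k ω = 1} ∪ {ω | ξ k ω = -1})ᶜ = 0 := by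
    rw [measure_compl (hA.union hB) (measure_ne_top _ _), hunion, measure_univ, tsub_self]
  have hmem : ({ω | ξ k ω = 1} ∪ {ω | ξ k ω = -1}) ∈ ae P := by
    rw [mem_ae_iff]; exact hc
  filter_upwards [hmem] with ω hω
  simpa using hω

lemma integrable_bdd {f : Ω → ℝ} (hf : Measurable f) {c : ℝ}
    (h : ∀ᵐ ω ∂P, |f ω| ≤ c) : Integrable f P :=
  Integrable.mono' (integrable_const c) hf.aestronglyMeasurable
    (by simpa [Real.norm_eq_abs] using h)

lemma integral_xi (hmeas : ∀ k, Measurable (ξ k))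
    (hdist : ∀ k, P {ω | ξ k ω = 1} = 1/2 ∧ P {ω | ξ k ω = -1} = 1/2) (k : ℤ) :
    ∫ ω, ξ k ω ∂P = 0 := by
  have hA : MeasurableSet {ω | ξ k ω = 1} := hmeas k (measurableSet_singleton 1)
  have hB : MeasurableSet {ω | ξ k ω = -1} := hmeas k (measurableSet_singleton (-1))
  have heq : ξ k =ᵐ[P] fun ω => Set.indicator {ω | ξ k ω = 1} (fun _ => (1:ℝ)) ω
      + Set.indicator {ω | ξ k ω = -1} (fun _ => (-1:ℝ)) ω := by
    filter_upwards [ae_pm P ξ hmeas hdist] with ω hω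
    rcases hω k with h | h
    · have h1 : ω ∈ {ω | ξ k ω = 1} := h
      have h2 : ω ∉ {ω | ξ k ω = -1} := by simp only [Set.mem_setOf_eq, h]; norm_num
      simp [Set.indicator_of_mem h1, Set.indicator_of_notMem h2, h]
    · have h1 : ω ∉ {ω | ξ k ω = 1} := by simp only [Set.mem_setOf_eq, h]; norm_num
      have h2 : ω ∈ {ω | ξ k ω = -1} := h
      simp [Set.indicator_of_notMem h1, Set.indicator_of_mem h2, h]
  rw [integral_congr_ae heq, integral_add ((integrable_const _).indicator hA)
      ((integrable_const _).indicator hB), integral_indicator_const _ hA,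
      integral_indicator_const _ hB, measureReal_def, measureReal_def, (hdist k).1, (hdist k).2]
  norm_num


lemma integrable_prod (hmeas : ∀ k, Measurable (ξ k))
    (hdist : ∀ k, P {ω | ξ k ω = 1} = 1/2 ∧ P {ω | ξ k ω = -1} = 1/2) (s : Finset ℤ) :
    Integrable (fun ω => ∏ i ∈ s, ξ i ω) P := by
  apply integrable_bdd P (Finset.measurable_prod s fun i _ => hmeas i) (c := 1)
  filter_upwards [ae_pm P ξ hmeas hdist] with ω hω
  rw [Finset.abs_prod]
  refine le_of_eq (Finset.prod_eq_one fun i _ => ?_)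
  rcases hω i with h | h <;> rw [h] <;> norm_num

lemma integral_prod_eq_zero (hmeas : ∀ k, Measurable (ξ k))
    (hindep : iIndepFun ξ P)
    (hdist : ∀ k, P {ω | ξ k ω = 1} = 1/2 ∧ P {ω | ξ k ω = -1} = 1/2)
    {s : Finset ℤ} (hs : s.Nonempty) :
    ∫ ω, ∏ i ∈ s, ξ i ω ∂P = 0 := by
  obtain ⟨a, ha⟩ := hs
  have hindep2 : IndepFun (∏ j ∈ s.erase a, ξ j) (ξ a) P :=
    hindep.indepFun_finsetProd_of_notMem hmeas (Finset.notMem_erase a s)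
  have hre : ∫ ω, ∏ i ∈ s, ξ i ω ∂P
      = ∫ ω, ((∏ j ∈ s.erase a, ξ j) * ξ a) ω ∂P := by
    refine integral_congr_ae (Eventually.of_forall fun ω => ?_)
    simp only [Pi.mul_apply, Finset.prod_apply]
    rw [← Finset.mul_prod_erase s _ ha, mul_comm]
  have hint1 : Integrable (∏ j ∈ s.erase a, ξ j) P := by
    have := integrable_prod P ξ hmeas hdist (s.erase a)
    refine this.congr (Eventually.of_forall fun ω => ?_)
    simp [Finset.prod_apply]
  have hint2 : Integrable (ξ a) P := by
    apply integrable_bdd P (hmeas a) (c := 1)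
    filter_upwards [ae_pm P ξ hmeas hdist] with ω hω
    rcases hω a with h | h <;> rw [h] <;> norm_num
  rw [hre, hindep2.integral_mul_eq_mul_integral hint1.aestronglyMeasurable hint2.aestronglyMeasurable,
    integral_xi P ξ hmeas hdist a, mul_zero]

lemma integral_corr (hmeas : ∀ k, Measurable (ξ k))
    (hindep : iIndepFun ξ P)
    (hdist : ∀ k, P {ω | ξ k ω = 1} = 1/2 ∧ P {ω | ξ k ω = -1} = 1/2)
    {n : ℤ} (hn : n ≠ 0) {m m' : ℤ} (hmm : m ≠ m') :
    ∫ ω, (ξ m ω * ξ (m+n) ω) * (ξ m' ω * ξ (m'+n) ω) ∂P = 0 := by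
  by_cases h1 : m' = m + n
  · subst h1
    have heq : (fun ω => (ξ m ω * ξ (m+n) ω) * (ξ (m+n) ω * ξ (m+n+n) ω)) =ᵐ[P]
        fun ω => ∏ i ∈ ({m, m+n+n} : Finset ℤ), ξ i ω := by
      filter_upwards [ae_pm P ξ hmeas hdist] with ω hω
      have h2 : ξ (m+n) ω * ξ (m+n) ω = 1 := by
        rcases hω (m+n) with h | h <;> rw [h] <;> norm_num
      rw [Finset.prod_insert (by simp only [Finset.mem_singleton]; omega),
        Finset.prod_singleton]
      calc (ξ m ω * ξ (m+n) ω) * (ξ (m+n) ω * ξ (m+n+n) ω)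
          = (ξ (m+n) ω * ξ (m+n) ω) * (ξ m ω * ξ (m+n+n) ω) := by ring
        _ = ξ m ω * ξ (m+n+n) ω := by rw [h2, one_mul]
    rw [integral_congr_ae heq]
    exact integral_prod_eq_zero P ξ hmeas hindep hdist ⟨m, by simp⟩
  · by_cases h2 : m = m' + n
    · subst h2
      have heq : (fun ω => (ξ (m'+n) ω * ξ (m'+n+n) ω) * (ξ m' ω * ξ (m'+n) ω)) =ᵐ[P]
          fun ω => ∏ i ∈ ({m', m'+n+n} : Finset ℤ), ξ i ω := by
        filter_upwards [ae_pm P ξ hmeas hdist] with ω hω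
        have h2 : ξ (m'+n) ω * ξ (m'+n) ω = 1 := by
          rcases hω (m'+n) with h | h <;> rw [h] <;> norm_num
        rw [Finset.prod_insert (by simp only [Finset.mem_singleton]; omega),
          Finset.prod_singleton]
        calc (ξ (m'+n) ω * ξ (m'+n+n) ω) * (ξ m' ω * ξ (m'+n) ω)
            = (ξ (m'+n) ω * ξ (m'+n) ω) * (ξ m' ω * ξ (m'+n+n) ω) := by ring
          _ = ξ m' ω * ξ (m'+n+n) ω := by rw [h2, one_mul]
      rw [integral_congr_ae heq]
      exact integral_prod_eq_zero P ξ hmeas hindep hdist ⟨m', by simp⟩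
    · have heq : (fun ω => (ξ m ω * ξ (m+n) ω) * (ξ m' ω * ξ (m'+n) ω))
          = fun ω => ∏ i ∈ ({m, m+n, m', m'+n} : Finset ℤ), ξ i ω := by
        funext ω
        rw [Finset.prod_insert (by simp only [Finset.mem_insert, Finset.mem_singleton]; omega),
          Finset.prod_insert (by simp only [Finset.mem_insert, Finset.mem_singleton]; omega),
          Finset.prod_insert (by simp only [Finset.mem_singleton]; omega),
          Finset.prod_singleton]
        ring
      rw [heq]
      exact integral_prod_eq_zero P ξ hmeas hindep hdist ⟨m, by simp⟩


lemma var_bound (hmeas : ∀ k, Measurable (ξ k))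
    (hindep : iIndepFun ξ P)
    (hdist : ∀ k, P {ω | ξ k ω = 1} = 1/2 ∧ P {ω | ξ k ω = -1} = 1/2)
    (b : ℤ → ℝ) (C : ℝ) (hbdd : ∀ n : ℤ, |b n| ≤ C)
    {n : ℤ} (hn : n ≠ 0) (N : ℕ) :
    ∫ ω, (∑ m ∈ Finset.Icc (-(N:ℤ)) (N:ℤ),
        (b m * b (m+n)) * (ξ m ω * ξ (m+n) ω))^2 ∂P ≤ (2*(N:ℝ)+1) * C^4 := by
  have hC : 0 ≤ C := le_trans (abs_nonneg _) (hbdd 0)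
  set I := Finset.Icc (-(N:ℤ)) (N:ℤ) with hI
  have hYint : ∀ m m' : ℤ, Integrable
      (fun ω => (ξ m ω * ξ (m+n) ω) * (ξ m' ω * ξ (m'+n) ω)) P := by
    intro m m'
    apply integrable_bdd P
      (((hmeas m).mul (hmeas (m+n))).mul ((hmeas m').mul (hmeas (m'+n)))) (c := 1)
    filter_upwards [ae_pm P ξ hmeas hdist] with ω hω
    have h : ∀ k : ℤ, |ξ k ω| = 1 := by
      intro k; rcases hω k with h | h <;> rw [h] <;> norm_num
    rw [Pi.mul_apply, Pi.mul_apply, Pi.mul_apply, abs_mul, abs_mul, abs_mul, h, h, h, h]; norm_num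
  have expand : ∀ ω, (∑ m ∈ I, (b m * b (m+n)) * (ξ m ω * ξ (m+n) ω))^2
      = ∑ m ∈ I, ∑ m' ∈ I, ((b m * b (m+n)) * (b m' * b (m'+n)))
          * ((ξ m ω * ξ (m+n) ω) * (ξ m' ω * ξ (m'+n) ω)) := by
    intro ω
    rw [sq, Finset.sum_mul_sum]
    exact Finset.sum_congr rfl fun m _ => Finset.sum_congr rfl fun m' _ => by ring
  have hint : ∫ ω, (∑ m ∈ I, (b m * b (m+n)) * (ξ m ω * ξ (m+n) ω))^2 ∂P
      = ∑ m ∈ I, ∑ m' ∈ I, ((b m * b (m+n)) * (b m' * b (m'+n)))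
          * ∫ ω, (ξ m ω * ξ (m+n) ω) * (ξ m' ω * ξ (m'+n) ω) ∂P := by
    rw [integral_congr_ae (Eventually.of_forall expand),
      integral_finset_sum _ (fun m _ => integrable_finset_sum _
        (fun m' _ => ((hYint m m').const_mul _)))]
    exact Finset.sum_congr rfl fun m _ => by
      rw [integral_finset_sum _ (fun m' _ => ((hYint m m').const_mul _))]
      exact Finset.sum_congr rfl fun m' _ => integral_const_mul _ _
  rw [hint]
  have hdiag : ∀ m ∈ I, ∑ m' ∈ I, ((b m * b (m+n)) * (b m' * b (m'+n)))
      * ∫ ω, (ξ m ω * ξ (m+n) ω) * (ξ m' ω * ξ (m'+n) ω) ∂P ≤ C^4 := by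
    intro m hm
    rw [Finset.sum_eq_single_of_mem m hm (fun m' _ hne => by
      rw [integral_corr P ξ hmeas hindep hdist hn (Ne.symm hne), mul_zero])]
    have h1 : ∫ ω, (ξ m ω * ξ (m+n) ω) * (ξ m ω * ξ (m+n) ω) ∂P ≤ 1 := by
      have := integral_const (μ := P) (1:ℝ)
      simp only [measureReal_def, measure_univ, ENNReal.toReal_one, smul_eq_mul, one_mul] at this
      rw [← this]
      refine integral_mono_ae (hYint m m) (integrable_const 1) ?_
      filter_upwards [ae_pm P ξ hmeas hdist] with ω hω
      have h : ∀ k : ℤ, ξ k ω * ξ k ω = 1 := by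
        intro k; rcases hω k with h | h <;> rw [h] <;> norm_num
      calc (ξ m ω * ξ (m+n) ω) * (ξ m ω * ξ (m+n) ω)
          = (ξ m ω * ξ m ω) * (ξ (m+n) ω * ξ (m+n) ω) := by ring
        _ = 1 := by rw [h, h, one_mul]
        _ ≤ 1 := le_refl 1
    have h2 : 0 ≤ ∫ ω, (ξ m ω * ξ (m+n) ω) * (ξ m ω * ξ (m+n) ω) ∂P := by
      refine integral_nonneg fun ω => ?_
      have : (ξ m ω * ξ (m+n) ω) * (ξ m ω * ξ (m+n) ω) = (ξ m ω * ξ (m+n) ω)^2 := by ring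
      rw [this]; positivity
    have h3 : (b m * b (m+n)) * (b m * b (m+n)) ≤ C^4 := by
      have hb1 := hbdd m; have hb2 := hbdd (m+n)
      have ha1 := abs_nonneg (b m); have ha2 := abs_nonneg (b (m+n))
      have e1 : (b m * b (m+n)) * (b m * b (m+n)) = (b m)^2 * (b (m+n))^2 := by ring
      have e2 : (b m)^2 = |b m|^2 := (sq_abs _).symm
      have e3 : (b (m+n))^2 = |b (m+n)|^2 := (sq_abs _).symm
      rw [e1, e2, e3]
      calc |b m|^2 * |b (m+n)|^2 ≤ C^2 * C^2 := by
            apply mul_le_mul (pow_le_pow_left₀ ha1 hb1 2) (pow_le_pow_left₀ ha2 hb2 2)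
              (by positivity) (by positivity)
        _ = C^4 := by ring
    have h4 : 0 ≤ (b m * b (m+n)) * (b m * b (m+n)) := mul_self_nonneg _
    calc (b m * b (m+n)) * (b m * b (m+n))
          * ∫ ω, (ξ m ω * ξ (m+n) ω) * (ξ m ω * ξ (m+n) ω) ∂P
        ≤ C^4 * 1 := mul_le_mul h3 h1 h2 (by positivity)
      _ = C^4 := mul_one _
  calc ∑ m ∈ I, ∑ m' ∈ I, ((b m * b (m+n)) * (b m' * b (m'+n)))
        * ∫ ω, (ξ m ω * ξ (m+n) ω) * (ξ m' ω * ξ (m'+n) ω) ∂P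
      ≤ ∑ m ∈ I, C^4 := Finset.sum_le_sum hdiag
    _ = (2*(N:ℝ)+1) * C^4 := by
        rw [Finset.sum_const, nsmul_eq_mul]
        congr 1
        have : I.card = 2*N+1 := by rw [hI, Int.card_Icc]; omega
        rw [this]; push_cast; ring


lemma ae_tendsto_sq (hmeas : ∀ k, Measurable (ξ k))
    (hindep : iIndepFun ξ P)
    (hdist : ∀ k, P {ω | ξ k ω = 1} = 1/2 ∧ P {ω | ξ k ω = -1} = 1/2)
    (b : ℤ → ℝ) (C : ℝ) (hbdd : ∀ n : ℤ, |b n| ≤ C)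
    {n : ℤ} (hn : n ≠ 0) :
    ∀ᵐ ω ∂P, Tendsto (fun k : ℕ =>
      (1/(2*((k^2 : ℕ):ℝ)+1)) * ∑ m ∈ Finset.Icc (-((k^2:ℕ):ℤ)) ((k^2:ℕ):ℤ),
        (b m * b (m+n)) * (ξ m ω * ξ (m+n) ω)) atTop (nhds 0) := by
  have hC : 0 ≤ C := le_trans (abs_nonneg _) (hbdd 0)
  set A : ℕ → Ω → ℝ := fun N ω => (1/(2*(N:ℝ)+1)) *
    ∑ m ∈ Finset.Icc (-(N:ℤ)) (N:ℤ), (b m * b (m+n)) * (ξ m ω * ξ (m+n) ω) with hA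
  have hAmeas : ∀ N, Measurable (A N) := fun N =>
    (Finset.measurable_sum _ fun m _ =>
      ((hmeas m).mul (hmeas (m+n))).const_mul _).const_mul _
  have hSbdd : ∀ᵐ ω ∂P, ∀ N : ℕ, |A N ω| ≤ C^2 := by
    filter_upwards [ae_pm P ξ hmeas hdist] with ω hω N
    have habs : ∀ k : ℤ, |ξ k ω| = 1 := by
      intro k; rcases hω k with h | h <;> rw [h] <;> norm_num
    have hterm : ∀ m : ℤ, |(b m * b (m+n)) * (ξ m ω * ξ (m+n) ω)| ≤ C^2 := by
      intro m
      rw [abs_mul, abs_mul, abs_mul, habs, habs, mul_one, mul_one]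
      calc |b m| * |b (m+n)| ≤ C * C :=
            mul_le_mul (hbdd m) (hbdd (m+n)) (abs_nonneg _) hC
        _ = C^2 := (sq C).symm
    have hsum : |∑ m ∈ Finset.Icc (-(N:ℤ)) (N:ℤ),
        (b m * b (m+n)) * (ξ m ω * ξ (m+n) ω)| ≤ (2*(N:ℝ)+1) * C^2 := by
      calc |∑ m ∈ Finset.Icc (-(N:ℤ)) (N:ℤ), (b m * b (m+n)) * (ξ m ω * ξ (m+n) ω)|
          ≤ ∑ m ∈ Finset.Icc (-(N:ℤ)) (N:ℤ), |(b m * b (m+n)) * (ξ m ω * ξ (m+n) ω)| :=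
            Finset.abs_sum_le_sum_abs _ _
        _ ≤ ∑ m ∈ Finset.Icc (-(N:ℤ)) (N:ℤ), C^2 :=
            Finset.sum_le_sum fun m _ => hterm m
        _ = (2*(N:ℝ)+1) * C^2 := by
            rw [Finset.sum_const, nsmul_eq_mul]
            congr 1
            have : (Finset.Icc (-(N:ℤ)) (N:ℤ)).card = 2*N+1 := by
              rw [Int.card_Icc]; omega
            rw [this]; push_cast; ring
    have hd : (0:ℝ) < 2*(N:ℝ)+1 := by positivity
    rw [hA]
    simp only [abs_mul]
    rw [abs_of_pos (by positivity : (0:ℝ) < 1/(2*(N:ℝ)+1))]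
    calc 1/(2*(N:ℝ)+1) * |∑ m ∈ Finset.Icc (-(N:ℤ)) (N:ℤ),
          (b m * b (m+n)) * (ξ m ω * ξ (m+n) ω)|
        ≤ 1/(2*(N:ℝ)+1) * ((2*(N:ℝ)+1) * C^2) :=
          mul_le_mul_of_nonneg_left hsum (by positivity)
      _ = C^2 := by field_simp
  have hAint : ∀ N, Integrable (fun ω => (A N ω)^2) P := by
    intro N
    apply integrable_bdd P ((hAmeas N).pow_const 2) (c := (C^2)^2)
    filter_upwards [hSbdd] with ω hω
    rw [abs_pow]
    exact pow_le_pow_left₀ (abs_nonneg _) (hω N) 2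
  have hvar : ∀ N : ℕ, ∫ ω, (A N ω)^2 ∂P ≤ C^4/(2*(N:ℝ)+1) := by
    intro N
    have hd : (0:ℝ) < 2*(N:ℝ)+1 := by positivity
    have e1 : (fun ω => (A N ω)^2) = fun ω => (1/(2*(N:ℝ)+1))^2 *
        (∑ m ∈ Finset.Icc (-(N:ℤ)) (N:ℤ), (b m * b (m+n)) * (ξ m ω * ξ (m+n) ω))^2 := by
      funext ω; rw [hA]; ring
    rw [e1, integral_const_mul]
    calc (1/(2*(N:ℝ)+1))^2 * ∫ ω, (∑ m ∈ Finset.Icc (-(N:ℤ)) (N:ℤ),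
          (b m * b (m+n)) * (ξ m ω * ξ (m+n) ω))^2 ∂P
        ≤ (1/(2*(N:ℝ)+1))^2 * ((2*(N:ℝ)+1) * C^4) :=
          mul_le_mul_of_nonneg_left
            (var_bound P ξ hmeas hindep hdist b C hbdd hn N) (by positivity)
      _ = C^4/(2*(N:ℝ)+1) := by field_simp
  set u : ℕ → Ω → ENNReal := fun k ω => ENNReal.ofReal ((A (k^2) ω)^2) with hu
  have humeas : ∀ k, Measurable (u k) := fun k =>
    ((hAmeas (k^2)).pow_const 2).ennreal_ofReal
  have h1 : ∀ k : ℕ, ∫⁻ ω, u k ω ∂P ≤ ENNReal.ofReal (C^4/(2*(k:ℝ)^2+1)) := by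
    intro k
    rw [hu]
    rw [← ofReal_integral_eq_lintegral_ofReal (hAint (k^2))
      (Eventually.of_forall fun ω => sq_nonneg _)]
    apply ENNReal.ofReal_le_ofReal
    have := hvar (k^2)
    have e : (2*(((k:ℕ)^2 : ℕ):ℝ)+1) = 2*(k:ℝ)^2+1 := by push_cast; ring
    rw [e] at this
    exact this
  have hsummable : Summable (fun k : ℕ => C^4/(2*(k:ℝ)^2+1)) := by
    have h0 : Summable (fun k : ℕ => 1/((k:ℝ)+1)^2) := by
      have hs := (summable_nat_add_iff 1).mpr
        (Real.summable_one_div_nat_pow.mpr (by norm_num : 1 < 2))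
      refine hs.congr fun k => ?_
      push_cast
      ring
    refine Summable.of_nonneg_of_le (fun k => by positivity) (fun k => ?_)
      (h0.mul_left (2*C^4))
    have hk : ((k:ℝ)+1)^2 ≤ 2*(2*(k:ℝ)^2+1) := by nlinarith [sq_nonneg ((k:ℝ)-1)]
    rw [mul_one_div, div_le_div_iff₀ (by positivity) (by positivity)]
    calc C^4 * ((k:ℝ)+1)^2 ≤ C^4 * (2*(2*(k:ℝ)^2+1)) :=
          mul_le_mul_of_nonneg_left hk (by positivity)
      _ = 2*C^4*(2*(k:ℝ)^2+1) := by ring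
  have htsum : ∑' k : ℕ, ∫⁻ ω, u k ω ∂P ≤ ENNReal.ofReal (∑' k : ℕ, C^4/(2*(k:ℝ)^2+1)) := by
    calc ∑' k : ℕ, ∫⁻ ω, u k ω ∂P ≤ ∑' k : ℕ, ENNReal.ofReal (C^4/(2*(k:ℝ)^2+1)) :=
          ENNReal.tsum_le_tsum h1
      _ = ENNReal.ofReal (∑' k : ℕ, C^4/(2*(k:ℝ)^2+1)) :=
          (ENNReal.ofReal_tsum_of_nonneg (fun k => by positivity) hsummable).symm
  have hfin : ∫⁻ ω, ∑' k : ℕ, u k ω ∂P < ⊤ := by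
    rw [lintegral_tsum (fun k => (humeas k).aemeasurable)]
    exact lt_of_le_of_lt htsum ENNReal.ofReal_lt_top
  filter_upwards [ae_lt_top (Measurable.ennreal_tsum humeas) hfin.ne] with ω hω
  have h2 : Tendsto (fun k => u k ω) atTop (nhds 0) :=
    ENNReal.tendsto_atTop_zero_of_tsum_ne_top hω.ne
  have h3 : Tendsto (fun k => (A (k^2) ω)^2) atTop (nhds 0) := by
    have h4 := (ENNReal.tendsto_toReal (by simp : (0:ENNReal) ≠ ⊤)).comp h2
    simp only [ENNReal.toReal_zero] at h4
    refine h4.congr fun k => ?_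
    exact ENNReal.toReal_ofReal (sq_nonneg _)
  have h5 : Tendsto (fun k => |A (k^2) ω|) atTop (nhds 0) := by
    have h6 := (Real.continuous_sqrt.tendsto 0).comp h3
    rw [Real.sqrt_zero] at h6
    exact h6.congr fun k => Real.sqrt_sq_eq_abs _
  have h7 : Tendsto (fun k => A (k^2) ω) atTop (nhds 0) := by
    have h8 : Tendsto (fun k => -|A (k^2) ω|) atTop (nhds 0) := by
      simpa using h5.neg
    exact tendsto_of_tendsto_of_tendsto_of_le_of_le h8 h5
      (fun k => neg_abs_le _) (fun k => le_abs_self _)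
  exact h7

end RandomSignAux

open RandomSignAux in
/-- Randomising the signs of a bounded weight sequence `b` with average
squared scattering strength `1` via i.i.d. fair ±1 variables `ξ` produces, almost
surely, correlation sums converging to the Kronecker delta `δ_{n,0}` for every
`n : ℤ`; hence the diffraction of the covering hull equals Lebesgue measure. -/
theorem random_sign_cover_correlations
    {Ω : Type*} [MeasurableSpace Ω] (P : Measure Ω) [IsProbabilityMeasure P]
    (b : ℤ → ℝ) (C : ℝ) (hbdd : ∀ n : ℤ, |b n| ≤ C)
    (hmean : Tendsto (fun N : ℕ =>
        (1 / (2*(N:ℝ)+1)) * ∑ m ∈ Finset.Icc (-(N:ℤ)) (N:ℤ), (b m)^2)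
      atTop (nhds 1))
    (ξ : ℤ → Ω → ℝ) (hmeas : ∀ k, Measurable (ξ k))
    (hindep : iIndepFun ξ P)
    (hdist : ∀ k, P {ω | ξ k ω = 1} = 1/2 ∧ P {ω | ξ k ω = -1} = 1/2) :
    ∀ᵐ ω ∂P, ∀ n : ℤ,
      Tendsto (fun N : ℕ =>
          (1 / (2*(N:ℝ)+1)) *
            ∑ m ∈ Finset.Icc (-(N:ℤ)) (N:ℤ),
              (ξ m ω * b m) * (ξ (m+n) ω * b (m+n)))
        atTop (nhds (if n = 0 then 1 else 0)) := by
  have hC : 0 ≤ C := le_trans (abs_nonneg _) (hbdd 0)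
  rw [ae_all_iff]
  intro n
  by_cases hn : n = 0
  · subst hn
    filter_upwards [ae_pm P ξ hmeas hdist] with ω hω
    simp only [if_pos rfl]
    refine Tendsto.congr (fun N => ?_) hmean
    congr 1
    refine Finset.sum_congr rfl fun m _ => ?_
    have h2 : ξ m ω * ξ m ω = 1 := by
      rcases hω m with h | h <;> rw [h] <;> norm_num
    rw [add_zero]
    calc (b m)^2 = (ξ m ω * ξ m ω) * (b m * b m) := by rw [h2, one_mul, sq]
      _ = (ξ m ω * b m) * (ξ m ω * b m) := by ring
  · simp only [if_neg hn]
    filter_upwards [ae_pm P ξ hmeas hdist,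
      ae_tendsto_sq P ξ hmeas hindep hdist b C hbdd hn] with ω hω hZ
    set S : ℕ → ℝ := fun N => ∑ m ∈ Finset.Icc (-(N:ℤ)) (N:ℤ),
      (b m * b (m+n)) * (ξ m ω * ξ (m+n) ω) with hS
    set A : ℕ → ℝ := fun N => (1/(2*(N:ℝ)+1)) * S N with hA
    have hfun : (fun N : ℕ => (1 / (2*(N:ℝ)+1)) * ∑ m ∈ Finset.Icc (-(N:ℤ)) (N:ℤ),
        (ξ m ω * b m) * (ξ (m+n) ω * b (m+n))) = A := by
      funext N
      rw [hA, hS]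
      congr 1
      exact Finset.sum_congr rfl fun m _ => by ring
    rw [hfun]
    have hterm : ∀ m : ℤ, |(b m * b (m+n)) * (ξ m ω * ξ (m+n) ω)| ≤ C^2 := by
      intro m
      have habs : ∀ k : ℤ, |ξ k ω| = 1 := by
        intro k; rcases hω k with h | h <;> rw [h] <;> norm_num
      rw [abs_mul, abs_mul, abs_mul, habs, habs, mul_one, mul_one]
      calc |b m| * |b (m+n)| ≤ C * C :=
            mul_le_mul (hbdd m) (hbdd (m+n)) (abs_nonneg _) hC
        _ = C^2 := (sq C).symm
    -- bound function
    set g : ℕ → ℝ := fun k =>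
      |(1/(2*((k^2:ℕ):ℝ)+1)) * S (k^2)| + (4*(k:ℝ)*C^2)/(2*(k:ℝ)^2+1) with hg
    have hbound : ∀ N : ℕ, |A N| ≤ g (Nat.sqrt N) := by
      intro N
      set k := Nat.sqrt N with hk
      have hk1 : k^2 ≤ N := Nat.sqrt_le' N
      have hk2 : N ≤ k^2 + 2*k := by
        have h := Nat.sqrt_le_add N
        rw [← hk] at h
        have : k*k = k^2 := by ring
        omega
      have hle : ((k^2:ℕ):ℤ) ≤ (N:ℤ) := by exact_mod_cast hk1
      have hsub : Finset.Icc (-((k^2:ℕ):ℤ)) ((k^2:ℕ):ℤ) ⊆ Finset.Icc (-(N:ℤ)) (N:ℤ) :=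
        Finset.Icc_subset_Icc (by omega) (by omega)
      have hcard1 : (Finset.Icc (-(N:ℤ)) (N:ℤ)).card = 2*N+1 := by
        rw [Int.card_Icc]; omega
      have hcard2 : (Finset.Icc (-((k^2:ℕ):ℤ)) ((k^2:ℕ):ℤ)).card = 2*k^2+1 := by
        rw [Int.card_Icc]; omega
      have hSd : |S N - S (k^2)| ≤ ((2*N - 2*k^2 : ℕ) : ℝ) * C^2 := by
        rw [hS, ← Finset.sum_sdiff_eq_sub hsub]
        calc |∑ m ∈ Finset.Icc (-(N:ℤ)) (N:ℤ) \ Finset.Icc (-((k^2:ℕ):ℤ)) ((k^2:ℕ):ℤ),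
              (b m * b (m+n)) * (ξ m ω * ξ (m+n) ω)|
            ≤ ∑ m ∈ Finset.Icc (-(N:ℤ)) (N:ℤ) \ Finset.Icc (-((k^2:ℕ):ℤ)) ((k^2:ℕ):ℤ),
              |(b m * b (m+n)) * (ξ m ω * ξ (m+n) ω)| := Finset.abs_sum_le_sum_abs _ _
          _ ≤ ∑ m ∈ Finset.Icc (-(N:ℤ)) (N:ℤ) \ Finset.Icc (-((k^2:ℕ):ℤ)) ((k^2:ℕ):ℤ),
              C^2 := Finset.sum_le_sum fun m _ => hterm m
          _ = ((2*N - 2*k^2 : ℕ) : ℝ) * C^2 := by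
              rw [Finset.sum_const, nsmul_eq_mul, Finset.card_sdiff_of_subset hsub, hcard1, hcard2]
              congr 2
              omega
      have hSN : |S N| ≤ |S (k^2)| + 4*(k:ℝ)*C^2 := by
        have h1 : |S N| ≤ |S (k^2)| + |S N - S (k^2)| := by
          calc |S N| = |S (k^2) + (S N - S (k^2))| := by ring_nf
            _ ≤ |S (k^2)| + |S N - S (k^2)| := abs_add_le _ _
        have h2 : ((2*N - 2*k^2 : ℕ) : ℝ) * C^2 ≤ 4*(k:ℝ)*C^2 := by
          apply mul_le_mul_of_nonneg_right _ (by positivity)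
          have : (2*N - 2*k^2 : ℕ) ≤ 4*k := by omega
          calc ((2*N - 2*k^2 : ℕ) : ℝ) ≤ ((4*k : ℕ) : ℝ) := Nat.cast_le.mpr this
            _ = 4*(k:ℝ) := by push_cast; ring
        linarith [hSd]
      have hden : (2*((k^2:ℕ):ℝ)+1) ≤ 2*(N:ℝ)+1 := by
        have : ((k^2:ℕ):ℝ) ≤ (N:ℝ) := Nat.cast_le.mpr hk1
        linarith
      have hdpos : (0:ℝ) < 2*((k^2:ℕ):ℝ)+1 := by positivity
      have hANeq : |A N| = |S N| / (2*(N:ℝ)+1) := by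
        rw [hA]
        rw [abs_mul, abs_of_pos (by positivity : (0:ℝ) < 1/(2*(N:ℝ)+1))]
        ring
      rw [hANeq]
      simp only [hg]
      have step : |S N| / (2*(N:ℝ)+1) ≤ (|S (k^2)| + 4*(k:ℝ)*C^2) / (2*((k^2:ℕ):ℝ)+1) :=
        div_le_div₀ (by positivity) hSN hdpos hden
      refine le_trans step (le_of_eq ?_)
      have e1 : |(1/(2*((k^2:ℕ):ℝ)+1)) * S (k^2)| = |S (k^2)| / (2*((k^2:ℕ):ℝ)+1) := by
        rw [abs_mul, abs_of_pos (by positivity : (0:ℝ) < 1/(2*((k^2:ℕ):ℝ)+1))]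
        ring
      rw [e1]
      have e2 : ((k^2:ℕ):ℝ) = (k:ℝ)^2 := by push_cast; ring
      rw [e2]
      ring
    have hgtends : Tendsto g atTop (nhds 0) := by
      rw [hg]
      have h1 : Tendsto (fun k : ℕ => |(1/(2*((k^2:ℕ):ℝ)+1)) * S (k^2)|) atTop (nhds 0) := by
        have := hZ.abs
        simpa [hS] using this
      have h2 : Tendsto (fun k : ℕ => (4*(k:ℝ)*C^2)/(2*(k:ℝ)^2+1)) atTop (nhds 0) := by
        apply squeeze_zero' (g := fun k : ℕ => (4*C^2)/(k:ℝ))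
        · exact Eventually.of_forall fun k => by positivity
        · filter_upwards [eventually_ge_atTop 1] with k hk
          have hk0 : (0:ℝ) < (k:ℝ) := by exact_mod_cast hk
          rw [div_le_div_iff₀ (by positivity) hk0]
          nlinarith [sq_nonneg (k:ℝ), pow_nonneg hC 2]
        · exact tendsto_const_div_atTop_nhds_zero_nat (4*C^2)
      simpa using h1.add h2
    have hsqrt : Tendsto Nat.sqrt atTop atTop := by
      apply tendsto_atTop_atTop.mpr
      intro m
      exact ⟨m*m, fun a ha => Nat.le_sqrt.mpr ha⟩
    have habs : Tendsto (fun N => |A N|) atTop (nhds 0) :=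
      squeeze_zero (fun N => abs_nonneg _) hbound (hgtends.comp hsqrt)
    have hneg : Tendsto (fun N => -|A N|) atTop (nhds 0) := by simpa using habs.neg
    exact tendsto_of_tendsto_of_tendsto_of_le_of_le hneg habs
      (fun N => neg_abs_le _) (fun N => le_abs_self _)
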